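/- Let W be an r×r real matrix (r ≥ 1) all of whose entries are strictly positive, and let σ_1, …, σ_r be strictly positive reals. Then the spectral radius of the matrix product W · diag(σ_1, …, σ_r) is strictly less than 1 if and only if there exist γ_1, …, γ_r > 0 such that for every j ∈ {1, …, r}, (σ_j/γ_j²) · Σ_{i=1}^r γ_i² · W_{ij} < 1. -/

import Mathlib

open scoped ENNReal
open scoped NNReal

attribute [local instance] Matrix.linftyOpNormedRing Matrix.linftyOpNormedAlgebra

namespace Stmt1Aux

variable {r : ℕ}

lemma mem_spectrum_iff (A : Matrix (Fin r) (Fin r) ℂ) (μ : ℂ) :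
    μ ∈ spectrum ℂ A ↔ ∃ x : Fin r → ℂ, x ≠ 0 ∧ A.mulVec x = μ • x := by
  rw [← AlgEquiv.spectrum_eq (Matrix.toLinAlgEquiv' (R := ℂ) (n := Fin r)) A,
    ← Module.End.hasEigenvalue_iff_mem_spectrum]
  constructor
  · intro h
    obtain ⟨x, hx⟩ := h.exists_hasEigenvector
    refine ⟨x, hx.2, ?_⟩
    have h2 := Module.End.mem_eigenspace_iff.mp hx.1
    rwa [Matrix.toLinAlgEquiv'_apply] at h2
  · rintro ⟨x, hx0, hx⟩
    refine Module.End.hasEigenvalue_of_hasEigenvector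
      ⟨Module.End.mem_eigenspace_iff.mpr ?_, hx0⟩
    rwa [Matrix.toLinAlgEquiv'_apply]

lemma radius_lt_one (hr : 1 ≤ r) (M : Matrix (Fin r) (Fin r) ℝ) (hM : ∀ i j, 0 < M i j)
    (v : Fin r → ℝ) (hv : ∀ i, 0 < v i) (hlt : ∀ j, ∑ i, v i * M i j < v j) :
    spectralRadius ℂ (M.map (Complex.ofReal ·)) < 1 := by
  have hne : Nonempty (Fin r) := ⟨⟨0, hr⟩⟩
  set c : ℝ := Finset.univ.sup' (Finset.univ_nonempty) (fun j => (∑ i, v i * M i j) / v j)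
    with hc_def
  have hc1 : c < 1 := by
    rw [hc_def, Finset.sup'_lt_iff]
    intro j _
    exact (div_lt_one (hv j)).mpr (hlt j)
  have hcb : ∀ j, ∑ i, v i * M i j ≤ c * v j := by
    intro j
    have h1 : (∑ i, v i * M i j) / v j ≤ c :=
      Finset.le_sup' (f := fun j => (∑ i, v i * M i j) / v j) (Finset.mem_univ j)
    calc ∑ i, v i * M i j = ((∑ i, v i * M i j) / v j) * v j :=
          (div_mul_cancel₀ _ (hv j).ne').symm
      _ ≤ c * v j := by
          exact mul_le_mul_of_nonneg_right h1 (hv j).le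
  have hc0 : 0 ≤ c := by
    have j0 : Fin r := ⟨0, hr⟩
    refine le_trans ?_ (Finset.le_sup' (f := fun j => (∑ i, v i * M i j) / v j)
      (Finset.mem_univ j0))
    exact div_nonneg (Finset.sum_nonneg fun i _ => mul_nonneg (hv i).le (hM i j0).le) (hv j0).le
  -- bound eigenvalues
  have hbound : ∀ μ ∈ spectrum ℂ (M.map (Complex.ofReal ·)), ‖μ‖ ≤ c := by
    intro μ hμ
    obtain ⟨x, hx0, hx⟩ := (mem_spectrum_iff _ μ).mp hμ
    set S : ℝ := ∑ j, v j * ‖x j‖ with hS_def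
    have hS : 0 < S := by
      obtain ⟨j, hj⟩ := Function.ne_iff.mp hx0
      refine Finset.sum_pos' (fun i _ => mul_nonneg (hv i).le (norm_nonneg _))
        ⟨j, Finset.mem_univ j, mul_pos (hv j) (norm_pos_iff.mpr hj)⟩
    have key : ‖μ‖ * S ≤ c * S := by
      have h1 : ∀ j, ‖μ‖ * ‖x j‖ ≤ ∑ i, M j i * ‖x i‖ := by
        intro j
        have hj : μ * x j = ∑ i, (M j i : ℂ) * x i := by
          have := congrFun hx j
          simp only [Matrix.mulVec, dotProduct, Pi.smul_apply, smul_eq_mul,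
            Matrix.map_apply] at this
          rw [← this]
        calc ‖μ‖ * ‖x j‖ = ‖μ * x j‖ := (norm_mul _ _).symm
          _ = ‖∑ i, (M j i : ℂ) * x i‖ := by rw [hj]
          _ ≤ ∑ i, ‖(M j i : ℂ) * x i‖ := norm_sum_le _ _
          _ = ∑ i, M j i * ‖x i‖ := by
              refine Finset.sum_congr rfl fun i _ => ?_
              rw [norm_mul, Complex.norm_real, Real.norm_of_nonneg (hM j i).le]
      calc ‖μ‖ * S = ∑ j, v j * (‖μ‖ * ‖x j‖) := by
            rw [hS_def, Finset.mul_sum]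
            exact Finset.sum_congr rfl fun j _ => by ring
        _ ≤ ∑ j, v j * (∑ i, M j i * ‖x i‖) := by
            refine Finset.sum_le_sum fun j _ => mul_le_mul_of_nonneg_left (h1 j) (hv j).le
        _ = ∑ i, (∑ j, v j * M j i) * ‖x i‖ := by
            simp_rw [Finset.mul_sum]
            rw [Finset.sum_comm]
            refine Finset.sum_congr rfl fun i _ => ?_
            rw [Finset.sum_mul]
            exact Finset.sum_congr rfl fun j _ => by ring
        _ ≤ ∑ i, (c * v i) * ‖x i‖ := by
            refine Finset.sum_le_sum fun i _ => mul_le_mul_of_nonneg_right (hcb i) (norm_nonneg _)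
        _ = c * S := by
            rw [hS_def, Finset.mul_sum]
            exact Finset.sum_congr rfl fun i _ => by ring
    exact (mul_le_mul_iff_of_pos_right hS).mp key
  have : spectralRadius ℂ (M.map (Complex.ofReal ·)) ≤ ENNReal.ofReal c := by
    rw [spectralRadius]
    refine iSup₂_le fun μ hμ => ?_
    have := hbound μ hμ
    rw [← ENNReal.ofReal_coe_nnreal, coe_nnnorm]
    exact ENNReal.ofReal_le_ofReal this
  refine lt_of_le_of_lt this ?_
  rw [← ENNReal.ofReal_one]
  exact ENNReal.ofReal_lt_ofReal_iff_of_nonneg hc0 |>.mpr hc1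


variable {r : ℕ}

lemma entry_le_norm (A : Matrix (Fin r) (Fin r) ℂ) (i j : Fin r) : ‖A i j‖ ≤ ‖A‖ := by
  have h1 : ‖A i j‖₊ ≤ ‖A‖₊ := by
    rw [Matrix.linfty_opNNNorm_def]
    exact le_trans (Finset.single_le_sum (f := fun j => ‖A i j‖₊)
      (fun _ _ => zero_le) (Finset.mem_univ j))
      (Finset.le_sup (f := fun i => ∑ j, ‖A i j‖₊) (Finset.mem_univ i))
  exact_mod_cast h1

lemma pow_entry_nonneg (M : Matrix (Fin r) (Fin r) ℝ) (hM : ∀ i j, 0 ≤ M i j) (k : ℕ) :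
    ∀ i j, 0 ≤ (M ^ k) i j := by
  induction k with
  | zero => intro i j; by_cases h : i = j <;> simp [pow_zero, Matrix.one_apply, h]
  | succ n ih =>
    intro i j
    rw [pow_succ, Matrix.mul_apply]
    exact Finset.sum_nonneg fun l _ => mul_nonneg (ih i l) (hM l j)

lemma exists_v (M : Matrix (Fin r) (Fin r) ℝ) (hM : ∀ i j, 0 < M i j)
    (h : spectralRadius ℂ (M.map (Complex.ofReal ·)) < 1) :
    ∃ v : Fin r → ℝ, (∀ i, 1 ≤ v i) ∧ ∀ j, ∑ i, v i * M i j < v j := by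
  set A : Matrix (Fin r) (Fin r) ℂ := M.map (Complex.ofReal ·) with hA_def
  have hpow : ∀ n : ℕ, A ^ n = (M ^ n).map (Complex.ofReal ·) := by
    intro n
    have h1 : A = Complex.ofRealHom.mapMatrix M := rfl
    rw [h1, ← map_pow]
    rfl
  -- choose c between spectral radius and 1
  obtain ⟨c, hc1, hc2⟩ := ENNReal.lt_iff_exists_nnreal_btwn.mp h
  have hc2' : (c : ℝ) < 1 := by exact_mod_cast hc2
  have hc0 : (0:ℝ) ≤ c := c.coe_nonneg
  -- Gelfand
  have htend := spectrum.pow_nnnorm_pow_one_div_tendsto_nhds_spectralRadius A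
  have hev : ∀ᶠ n : ℕ in Filter.atTop, (‖A ^ n‖₊ : ℝ≥0∞) ^ (1 / (n:ℝ)) < (c : ℝ≥0∞) :=
    htend.eventually_lt_const hc1
  obtain ⟨N, hN⟩ := Filter.eventually_atTop.mp hev
  have hbound : ∀ n, N + 1 ≤ n → ‖A ^ n‖ ≤ (c:ℝ) ^ n := by
    intro n hn
    have hn1 : 1 ≤ n := le_trans (Nat.le_add_left 1 N) hn
    have hNn : N ≤ n := le_trans (Nat.le_succ N) hn
    have h0 := hN n hNn
    have hne : ((n:ℝ)) ≠ 0 := by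
      have : (0:ℝ) < n := by exact_mod_cast hn1
      exact this.ne'
    have h1 : (‖A ^ n‖₊ : ℝ≥0∞) < (c : ℝ≥0∞) ^ ((n:ℕ):ℝ) := by
      calc (‖A ^ n‖₊ : ℝ≥0∞) = ((‖A ^ n‖₊ : ℝ≥0∞) ^ (1/(n:ℝ))) ^ ((n:ℕ):ℝ) := by
            rw [← ENNReal.rpow_mul, one_div, inv_mul_cancel₀ hne, ENNReal.rpow_one]
        _ < (c : ℝ≥0∞) ^ ((n:ℕ):ℝ) := by
            refine ENNReal.rpow_lt_rpow h0 ?_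
            have hp : 0 < n := hn1
            exact_mod_cast hp
    rw [ENNReal.rpow_natCast, ← ENNReal.coe_pow] at h1
    have h2 : ‖A ^ n‖₊ < c ^ n := ENNReal.coe_lt_coe.mp h1
    have h3 : (‖A ^ n‖₊ : ℝ) ≤ ((c ^ n : ℝ≥0) : ℝ) := by exact_mod_cast h2.le
    rw [coe_nnnorm] at h3
    refine le_trans h3 ?_
    push_cast
    exact le_refl _
  -- entry summability
  have hMk : ∀ k i j, 0 ≤ (M ^ k) i j := pow_entry_nonneg M (fun i j => (hM i j).le)
  have hentry : ∀ k (i j : Fin r), (M ^ k) i j ≤ ‖A ^ k‖ := by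
    intro k i j
    have h5 : (A ^ k) i j = ((M ^ k) i j : ℂ) := by rw [hpow k]; rfl
    have h6 := entry_le_norm (A ^ k) i j
    rwa [h5, Complex.norm_real, Real.norm_of_nonneg (hMk k i j)] at h6
  have hsum : ∀ i j : Fin r, Summable (fun k : ℕ => (M ^ k) i j) := by
    intro i j
    refine Summable.of_norm_bounded_eventually_nat (g := fun k => (c:ℝ) ^ k)
      (summable_geometric_of_lt_one hc0 hc2') ?_
    filter_upwards [Filter.eventually_atTop.mpr ⟨N + 1, fun n hn => hbound n hn⟩] with k hk
    rw [Real.norm_of_nonneg (hMk k i j)]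
    exact le_trans (hentry k i j) hk
  have hcol : ∀ j : Fin r, Summable (fun k : ℕ => ∑ i, (M ^ k) i j) := by
    intro j
    exact summable_sum (fun i _ => hsum i j)
  set v : Fin r → ℝ := fun j => ∑' k : ℕ, ∑ i, (M ^ k) i j with hv_def
  have hcol0 : ∀ j : Fin r, (∑ i, (M ^ 0) i j) = 1 := by
    intro j
    simp [Matrix.one_apply]
  have hv1 : ∀ j, 1 ≤ v j := by
    intro j
    have := Summable.le_tsum (hcol j) 0 (fun k _ => Finset.sum_nonneg fun i _ => hMk k i j)
    rwa [hcol0 j] at this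
  refine ⟨v, hv1, fun j => ?_⟩
  have key : ∑ i, v i * M i j = v j - 1 := by
    have h1 : ∀ i, v i * M i j = ∑' k : ℕ, (∑ l, (M ^ k) l i) * M i j := by
      intro i
      rw [hv_def]
      exact (tsum_mul_right).symm
    have h2 : ∑ i, v i * M i j = ∑' k : ℕ, ∑ i, (∑ l, (M ^ k) l i) * M i j := by
      rw [Finset.sum_congr rfl fun i _ => h1 i]
      exact (Summable.tsum_finsetSum (fun i _ => (hcol i).mul_right _)).symm
    have h3 : ∀ k : ℕ, ∑ i, (∑ l, (M ^ k) l i) * M i j = ∑ l, (M ^ (k+1)) l j := by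
      intro k
      simp_rw [pow_succ, Matrix.mul_apply, Finset.sum_mul]
      rw [Finset.sum_comm]
    have h4 : v j = 1 + ∑' k : ℕ, ∑ i, (M ^ (k+1)) i j := by
      rw [hv_def]
      have := Summable.tsum_eq_zero_add (hcol j)
      rwa [hcol0 j] at this
    rw [h2]
    rw [tsum_congr h3]
    rw [h4]; ring
  rw [key]
  have := hv1 j
  linarith

end Stmt1Aux

/-- For an `r × r` real matrix `W` (`r ≥ 1`) with all entries strictly positive
and strictly positive reals `σ_1, …, σ_r`, the spectral radius of
`W * diag(σ)` is strictly less than `1` iff there exist `γ_1, …, γ_r > 0` such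
that `(σ j / γ j ^ 2) * ∑ i, γ i ^ 2 * W i j < 1` for every `j`. -/
theorem stmt1 {r : ℕ} (hr : 1 ≤ r) (W : Matrix (Fin r) (Fin r) ℝ)
    (hW : ∀ i j, 0 < W i j) (σ : Fin r → ℝ) (hσ : ∀ j, 0 < σ j) :
    spectralRadius ℂ ((W * Matrix.diagonal σ).map (Complex.ofReal ·)) < 1 ↔
      ∃ γ : Fin r → ℝ, (∀ i, 0 < γ i) ∧
        ∀ j, (σ j / (γ j) ^ 2) * ∑ i : Fin r, (γ i) ^ 2 * W i j < 1 := by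
  have hM : ∀ i j, 0 < (W * Matrix.diagonal σ) i j := by
    intro i j; rw [Matrix.mul_diagonal]; exact mul_pos (hW i j) (hσ j)
  constructor
  · intro h
    obtain ⟨v, hv1, hvlt⟩ := Stmt1Aux.exists_v (W * Matrix.diagonal σ) hM h
    have hv0 : ∀ i, 0 < v i := fun i => lt_of_lt_of_le one_pos (hv1 i)
    refine ⟨fun i => Real.sqrt (v i), fun i => Real.sqrt_pos.mpr (hv0 i), fun j => ?_⟩
    have hsq : ∀ i, Real.sqrt (v i) ^ 2 = v i := fun i => Real.sq_sqrt (hv0 i).le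
    simp_rw [hsq]
    have h2 := hvlt j
    simp_rw [Matrix.mul_diagonal] at h2
    rw [div_mul_eq_mul_div, div_lt_one (hv0 j)]
    calc σ j * ∑ i, v i * W i j = ∑ i, v i * (W i j * σ j) := by
          rw [Finset.mul_sum]; exact Finset.sum_congr rfl fun i _ => by ring
      _ < v j := h2
  · rintro ⟨γ, hγ0, hγ⟩
    refine Stmt1Aux.radius_lt_one hr (W * Matrix.diagonal σ) hM (fun i => γ i ^ 2)
      (fun i => pow_pos (hγ0 i) 2) (fun j => ?_)
    show ∑ i, γ i ^ 2 * (W * Matrix.diagonal σ) i j < γ j ^ 2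
    have h2 := hγ j
    rw [div_mul_eq_mul_div, div_lt_one (pow_pos (hγ0 j) 2)] at h2
    calc ∑ i, γ i ^ 2 * (W * Matrix.diagonal σ) i j
        = σ j * ∑ i, γ i ^ 2 * W i j := by
          rw [Finset.mul_sum]
          exact Finset.sum_congr rfl fun i _ => by rw [Matrix.mul_diagonal]; ring
      _ < γ j ^ 2 := h2
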